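/- Let b ≥ 1 be an integer and let p, q be reals with 0 ≤ p < 1 and p + q = b. Then p · Σ_{ℓ=0}^{b−1} (q^ℓ/ℓ!) · ∫₀¹ ζ^ℓ e^{−bζ} dζ ≥ p · H(b−1) ≥ ((19 − 67·e^{−3})/27) · p, where H(m) = ∫₀¹ e^{−ζ} · ( Σ_{ℓ=0}^{m} e^{−mζ}(mζ)^ℓ/ℓ! ) dζ for a nonnegative integer m. -/

import Mathlib

open Finset intervalIntegral Real

/-- `H m = ∫₀¹ e^{-ζ} Pr[Pois(mζ) ≤ m] dζ`. -/
noncomputable def H (m : ℕ) : ℝ :=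
  ∫ ζ in (0:ℝ)..1, Real.exp (-ζ) *
    ∑ ℓ ∈ Finset.range (m + 1),
      Real.exp (-((m : ℝ) * ζ)) * ((m : ℝ) * ζ) ^ ℓ / (Nat.factorial ℓ : ℝ)


lemma J_closed (c : ℝ) (hc : c ≠ 0) (l : ℕ) :
    ∫ ζ in (0:ℝ)..1, ζ ^ l * Real.exp (-(c * ζ)) =
      (Nat.factorial l : ℝ) / c ^ (l + 1) *
        (1 - Real.exp (-c) * ∑ j ∈ Finset.range (l + 1), c ^ j / (Nat.factorial j : ℝ)) := by
  induction l with
  | zero =>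
      have h : ∀ x ∈ Set.uIcc (0:ℝ) 1, HasDerivAt (fun ζ => -Real.exp (-(c * ζ)) / c)
          (Real.exp (-(c * x))) x := by
        intro x _
        have : HasDerivAt (fun ζ : ℝ => -(c * ζ)) (-c) x := by
          simpa using ((hasDerivAt_id x).const_mul c).fun_neg
        have := (this.exp.neg).div_const c
        simpa [hc, mul_comm, mul_div_assoc] using this
      have := intervalIntegral.integral_eq_sub_of_hasDerivAt h
        (by apply Continuous.intervalIntegrable; continuity)
      simp only [pow_zero, one_mul]
      rw [this]
      simp only [mul_one, mul_zero, neg_zero, Real.exp_zero, Finset.sum_range_one, pow_zero,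
        pow_one, Nat.factorial_zero, Nat.cast_one, div_one, zero_add, Finset.sum_range_succ,
        Finset.sum_range_zero]
      field_simp
      ring
  | succ l ih =>
      have hu : ∀ x ∈ Set.uIcc (0:ℝ) 1, HasDerivAt (fun ζ : ℝ => ζ ^ (l+1))
          (((l:ℝ)+1) * x ^ l) x := by
        intro x _
        simpa using (hasDerivAt_pow (l+1) x)
      have hv : ∀ x ∈ Set.uIcc (0:ℝ) 1, HasDerivAt (fun ζ => -Real.exp (-(c * ζ)) / c)
          (Real.exp (-(c * x))) x := by
        intro x _
        have : HasDerivAt (fun ζ : ℝ => -(c * ζ)) (-c) x := by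
          simpa using ((hasDerivAt_id x).const_mul c).fun_neg
        have := (this.exp.neg).div_const c
        simpa [hc, mul_comm, mul_div_assoc] using this
      have key := intervalIntegral.integral_mul_deriv_eq_deriv_mul hu hv
        (by apply Continuous.intervalIntegrable; continuity)
        (by apply Continuous.intervalIntegrable; continuity)
      -- key : ∫ x in 0..1, x^(l+1) * exp(-(c*x)) = ...
      have hrew : (∫ x in (0:ℝ)..1, ((l:ℝ) + 1) * x ^ l * (-Real.exp (-(c * x)) / c)) =
          (-((l:ℝ)+1)/c) * ∫ x in (0:ℝ)..1, x ^ l * Real.exp (-(c * x)) := by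
        rw [← intervalIntegral.integral_const_mul]
        apply intervalIntegral.integral_congr
        intro x _
        ring
      rw [key, hrew, ih]
      rw [Finset.sum_range_succ (fun j => c ^ j / (Nat.factorial j : ℝ)) (l+1)]
      simp only [Nat.factorial_succ, Nat.cast_mul, Nat.cast_add, Nat.cast_one, mul_zero,
        mul_one, Real.exp_zero]
      have hfac : (Nat.factorial l : ℝ) ≠ 0 := Nat.cast_ne_zero.mpr (Nat.factorial_ne_zero l)
      have hl1 : ((l:ℝ) + 1) ≠ 0 := by positivity
      field_simp
      ring

lemma Hsum (m : ℕ) : H m = ∑ ℓ ∈ Finset.range (m+1), ((m:ℝ)^ℓ / (Nat.factorial ℓ : ℝ)) *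
    ∫ ζ in (0:ℝ)..1, ζ ^ ℓ * Real.exp (-(((m:ℝ)+1) * ζ)) := by
  unfold H
  have h1 : (∫ ζ in (0:ℝ)..1, Real.exp (-ζ) *
      ∑ ℓ ∈ Finset.range (m + 1),
        Real.exp (-((m : ℝ) * ζ)) * ((m : ℝ) * ζ) ^ ℓ / (Nat.factorial ℓ : ℝ)) =
      ∫ ζ in (0:ℝ)..1, ∑ ℓ ∈ Finset.range (m + 1),
        ((m:ℝ)^ℓ / (Nat.factorial ℓ : ℝ)) * (ζ ^ ℓ * Real.exp (-(((m:ℝ)+1) * ζ))) := by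
    apply intervalIntegral.integral_congr
    intro ζ _
    simp only
    rw [Finset.mul_sum]
    apply Finset.sum_congr rfl
    intro ℓ _
    rw [show (-(((m:ℝ)+1) * ζ)) = (-ζ) + (-((m:ℝ) * ζ)) by ring, Real.exp_add, mul_pow]
    ring
  rw [h1, intervalIntegral.integral_finset_sum]
  · apply Finset.sum_congr rfl
    intro ℓ _
    rw [intervalIntegral.integral_const_mul]
  · intro ℓ _
    apply Continuous.intervalIntegrable
    continuity

lemma sum_swap_geo (x : ℝ) (f : ℕ → ℝ) (n : ℕ) :
    ∑ ℓ ∈ Finset.range n, x ^ ℓ * ∑ j ∈ Finset.range (ℓ+1), f j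
      = ∑ j ∈ Finset.range n, f j * ∑ ℓ ∈ Finset.Ico j n, x ^ ℓ := by
  induction n with
  | zero => simp
  | succ n ih =>
      have h1 : ∀ j ∈ Finset.range n, f j * ∑ ℓ ∈ Finset.Ico j (n+1), x ^ ℓ
          = f j * ∑ ℓ ∈ Finset.Ico j n, x ^ ℓ + x ^ n * f j := by
        intro j hj
        rw [Finset.sum_Ico_succ_top (le_of_lt (Finset.mem_range.mp hj))]
        ring
      rw [Finset.sum_range_succ, ih]
      conv_rhs => rw [Finset.sum_range_succ, Finset.sum_congr rfl h1,
        Finset.sum_add_distrib, ← Finset.mul_sum, Nat.Ico_succ_singleton, Finset.sum_singleton]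
      rw [Finset.sum_range_succ]
      ring

lemma H_closed (m : ℕ) :
    H m = 1 - ((m:ℝ)/((m:ℝ)+1))^(m+1)
      - Real.exp (-((m:ℝ)+1)) * (∑ j ∈ Finset.range (m+1), (m:ℝ)^j / (Nat.factorial j : ℝ))
      + ((m:ℝ)/((m:ℝ)+1))^(m+1) * Real.exp (-((m:ℝ)+1)) *
          (∑ j ∈ Finset.range (m+1), ((m:ℝ)+1)^j / (Nat.factorial j : ℝ)) := by
  have hM : (0:ℝ) < (m:ℝ)+1 := by positivity
  have hMne : ((m:ℝ)+1) ≠ 0 := ne_of_gt hM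
  set M : ℝ := (m:ℝ) with hMdef
  set r : ℝ := M/(M+1) with hrdef
  have hr1 : r ≠ 1 := by
    rw [hrdef]
    intro h
    have := (div_eq_one_iff_eq hMne).mp h
    linarith
  have hkey : r - 1 = -(1/(M+1)) := by rw [hrdef]; field_simp; ring
  set E : ℝ := Real.exp (-(M+1)) with hEdef
  have alg : ∀ (T Ex : ℝ) (ℓ : ℕ),
      (M^ℓ / (Nat.factorial ℓ : ℝ)) * ((Nat.factorial ℓ : ℝ)/(M+1)^(ℓ+1) * (1 - Ex*T))
        = (1/(M+1)) * (r^ℓ - Ex*(r^ℓ*T)) := by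
    intro T Ex ℓ
    have hfac : (Nat.factorial ℓ : ℝ) ≠ 0 := Nat.cast_ne_zero.mpr (Nat.factorial_ne_zero ℓ)
    rw [hrdef, div_pow]
    field_simp
    ring
  have hterm : ∀ ℓ ∈ Finset.range (m+1),
      (M^ℓ / (Nat.factorial ℓ : ℝ)) * ∫ ζ in (0:ℝ)..1, ζ ^ ℓ * Real.exp (-((M+1) * ζ))
      = (1/(M+1)) * (r^ℓ - E * (r^ℓ * ∑ j ∈ Finset.range (ℓ+1), (M+1)^j / (Nat.factorial j : ℝ))) := by
    intro ℓ _
    rw [J_closed _ hMne ℓ]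
    exact alg _ _ ℓ
  rw [Hsum, Finset.sum_congr rfl hterm, ← Finset.mul_sum, Finset.sum_sub_distrib,
    ← Finset.mul_sum, sum_swap_geo r (fun j => (M+1)^j / (Nat.factorial j : ℝ)) (m+1)]
  have hG1 : ∑ ℓ ∈ Finset.range (m+1), r ^ ℓ = (M+1) * (1 - r^(m+1)) := by
    rw [geom_sum_eq hr1, hkey]
    field_simp
    ring
  have hG2 : ∀ j ∈ Finset.range (m+1),
      (fun j => (M+1)^j / (Nat.factorial j : ℝ)) j * ∑ ℓ ∈ Finset.Ico j (m+1), r ^ ℓ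
      = (M+1) * (M^j / (Nat.factorial j : ℝ))
        - (M+1) * r^(m+1) * ((M+1)^j / (Nat.factorial j : ℝ)) := by
    intro j hj
    rw [geom_sum_Ico hr1 (le_of_lt (Finset.mem_range.mp hj)), hkey]
    simp only
    have hrj : (M+1)^j * r^j = M^j := by
      rw [hrdef, div_pow, mul_div_cancel₀]
      positivity
    have hfac : (Nat.factorial j : ℝ) ≠ 0 := Nat.cast_ne_zero.mpr (Nat.factorial_ne_zero j)
    have hdiv : (r^(m+1) - r^j)/(-(1/(M+1))) = (r^j - r^(m+1)) * (M+1) := by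
      field_simp
      ring
    rw [hdiv]
    linear_combination ((M+1)/(Nat.factorial j : ℝ)) * hrj
  rw [Finset.sum_congr rfl hG2, Finset.sum_sub_distrib, ← Finset.mul_sum, ← Finset.mul_sum,
    hG1]
  field_simp
  ring

lemma poisson_cdf_deriv (m : ℕ) (x : ℝ) :
    HasDerivAt (fun l : ℝ => Real.exp (-l) * ∑ j ∈ Finset.range (m+1), l^j / (Nat.factorial j : ℝ))
      (-(Real.exp (-x) * x^m / (Nat.factorial m : ℝ))) x := by
  have hS : HasDerivAt (fun l : ℝ => ∑ j ∈ Finset.range (m+1), l^j / (Nat.factorial j : ℝ))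
      (∑ j ∈ Finset.range m, x^j / (Nat.factorial j : ℝ)) x := by
    have h1 : HasDerivAt (fun l : ℝ => ∑ j ∈ Finset.range (m+1), l^j / (Nat.factorial j : ℝ))
        (∑ j ∈ Finset.range (m+1), (j : ℝ) * x^(j-1) / (Nat.factorial j : ℝ)) x := by
      apply HasDerivAt.fun_sum
      intro j _
      exact (hasDerivAt_pow j x).div_const _
    have h2 : ∑ j ∈ Finset.range (m+1), (j : ℝ) * x^(j-1) / (Nat.factorial j : ℝ)
        = ∑ j ∈ Finset.range m, x^j / (Nat.factorial j : ℝ) := by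
      rw [Finset.sum_range_succ']
      simp only [Nat.cast_zero, zero_mul, Nat.factorial_zero, Nat.cast_one, zero_div, add_zero]
      apply Finset.sum_congr rfl
      intro j _
      rw [Nat.factorial_succ, Nat.add_sub_cancel]
      push_cast
      have hfac : (Nat.factorial j : ℝ) ≠ 0 := Nat.cast_ne_zero.mpr (Nat.factorial_ne_zero j)
      field_simp
    rwa [h2] at h1
  have hE : HasDerivAt (fun l : ℝ => Real.exp (-l)) (-Real.exp (-x)) x := by
    simpa using ((hasDerivAt_id x).neg.exp)
  have := hE.mul hS
  have h3 : (-Real.exp (-x)) * (∑ j ∈ Finset.range (m+1), x^j / (Nat.factorial j : ℝ))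
      + Real.exp (-x) * (∑ j ∈ Finset.range m, x^j / (Nat.factorial j : ℝ))
      = -(Real.exp (-x) * x^m / (Nat.factorial m : ℝ)) := by
    rw [Finset.sum_range_succ]
    ring
  rwa [h3] at this

lemma stirling_lb (m : ℕ) (hm : 1 ≤ m) :
    Real.sqrt π * Real.sqrt (2*m) * ((m:ℝ)/Real.exp 1)^m ≤ (Nat.factorial m : ℝ) := by
  have ha := Stirling.stirlingSeq'_antitone
  have ht : Filter.Tendsto (Stirling.stirlingSeq ∘ Nat.succ) Filter.atTop (nhds (Real.sqrt π)) :=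
    Stirling.tendsto_stirlingSeq_sqrt_pi.comp (Filter.tendsto_add_atTop_nat 1)
  obtain ⟨k, hk⟩ := Nat.exists_eq_add_of_le hm
  have hbound : Real.sqrt π ≤ Stirling.stirlingSeq (k+1) := ha.le_of_tendsto ht k
  have hpos : 0 < Real.sqrt (2*m) * ((m:ℝ)/Real.exp 1)^m := by
    have : (0:ℝ) < m := by exact_mod_cast hm
    positivity
  have : Stirling.stirlingSeq m = (Nat.factorial m : ℝ) / (Real.sqrt (2*m) * ((m:ℝ)/Real.exp 1)^m) := rfl
  have hbm : Real.sqrt π ≤ Stirling.stirlingSeq m := by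
    rw [hk]; simpa [Nat.add_comm] using hbound
  rw [this, le_div_iff₀ hpos] at hbm
  linarith [hbm]

lemma pointwise_exp_pow (m : ℕ) (hm : 1 ≤ m) (x : ℝ) (hx : (m:ℝ) ≤ x) :
    Real.exp (-x) * x^m ≤ Real.exp (-(m:ℝ)) * (m:ℝ)^m := by
  have hm0 : (0:ℝ) < m := by exact_mod_cast hm
  have h1 : x/(m:ℝ) ≤ Real.exp (x/(m:ℝ) - 1) := by
    have := Real.add_one_le_exp (x/(m:ℝ) - 1)
    linarith
  have hx0 : (0:ℝ) < x := lt_of_lt_of_le hm0 hx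
  have h0 : (0:ℝ) ≤ x/(m:ℝ) := by positivity
  have h2 : (x/(m:ℝ))^m ≤ Real.exp (x/(m:ℝ) - 1) ^ m := pow_le_pow_left₀ h0 h1 m
  have h3 : Real.exp (x/(m:ℝ) - 1) ^ m = Real.exp (x - m) := by
    rw [← Real.exp_nat_mul]
    congr 1
    field_simp
  rw [h3, div_pow] at h2
  have h4 : x^m ≤ Real.exp (x - m) * (m:ℝ)^m := by
    rw [div_le_iff₀ (by positivity)] at h2
    linarith
  have h5 := mul_le_mul_of_nonneg_left h4 (Real.exp_pos (-x)).le
  calc Real.exp (-x) * x^m ≤ Real.exp (-x) * (Real.exp (x - m) * (m:ℝ)^m) := h5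
    _ = Real.exp (-(m:ℝ)) * (m:ℝ)^m := by rw [← mul_assoc, ← Real.exp_add]; ring_nf

lemma cdf_diff_le (m : ℕ) (hm : 1 ≤ m) :
    Real.exp (-(m:ℝ)) * ∑ j ∈ Finset.range (m+1), (m:ℝ)^j / (Nat.factorial j : ℝ)
      - Real.exp (-((m:ℝ)+1)) * ∑ j ∈ Finset.range (m+1), ((m:ℝ)+1)^j / (Nat.factorial j : ℝ)
      ≤ Real.exp (-(m:ℝ)) * (m:ℝ)^m / (Nat.factorial m : ℝ) := by
  set A : ℝ := Real.exp (-(m:ℝ)) * (m:ℝ)^m / (Nat.factorial m : ℝ) with hA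
  set f : ℝ → ℝ := fun l => Real.exp (-l) * ∑ j ∈ Finset.range (m+1), l^j / (Nat.factorial j : ℝ)
    with hf
  have hfacpos : (0:ℝ) < (Nat.factorial m : ℝ) := by exact_mod_cast Nat.factorial_pos m
  have key : ∀ x ∈ Set.uIcc (m:ℝ) ((m:ℝ)+1),
      HasDerivAt f (-(Real.exp (-x) * x^m / (Nat.factorial m : ℝ))) x := by
    intro x _
    exact poisson_cdf_deriv m x
  have hcont : Continuous fun x : ℝ => -(Real.exp (-x) * x^m / (Nat.factorial m : ℝ)) := by
    continuity
  have hint := intervalIntegral.integral_eq_sub_of_hasDerivAt key (hcont.intervalIntegrable _ _)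
  have hmono : (∫ x in (m:ℝ)..((m:ℝ)+1), (-A : ℝ))
      ≤ ∫ x in (m:ℝ)..((m:ℝ)+1), -(Real.exp (-x) * x^m / (Nat.factorial m : ℝ)) := by
    apply intervalIntegral.integral_mono_on (by linarith : (m:ℝ) ≤ (m:ℝ)+1)
    · exact intervalIntegrable_const
    · exact hcont.intervalIntegrable _ _
    · intro x hx
      apply neg_le_neg
      rw [hA]
      exact (div_le_div_iff_of_pos_right hfacpos).mpr (pointwise_exp_pow m hm x hx.1)
  rw [hint] at hmono
  rw [intervalIntegral.integral_const] at hmono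
  have hsm : ((m:ℝ)+1 - (m:ℝ)) • (-A) = -A := by
    rw [smul_eq_mul]
    ring
  rw [hsm] at hmono
  have e1 : f (m:ℝ) = Real.exp (-(m:ℝ)) * ∑ j ∈ Finset.range (m+1), (m:ℝ)^j / (Nat.factorial j : ℝ) := rfl
  have e2 : f ((m:ℝ)+1) = Real.exp (-((m:ℝ)+1)) * ∑ j ∈ Finset.range (m+1), ((m:ℝ)+1)^j / (Nat.factorial j : ℝ) := rfl
  linarith

lemma exp_neg_nat_le {k : ℕ} {a : ℝ} (h : 1 ≤ a * 2.7182818283 ^ k) :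
    Real.exp (-(k:ℝ)) ≤ a := by
  have hek : (2.7182818283:ℝ)^k ≤ Real.exp (k:ℝ) := by
    rw [← Real.exp_one_pow]
    exact pow_le_pow_left₀ (by norm_num) Real.exp_one_gt_d9.le k
  have hpow : (0:ℝ) < 2.7182818283 ^ k := by positivity
  have ha : 0 < a := by nlinarith
  have h2 : 1 ≤ a * Real.exp (k:ℝ) := by nlinarith
  have hpos : 0 < Real.exp (k:ℝ) := Real.exp_pos _
  have hinv : (Real.exp (k:ℝ))⁻¹ * Real.exp (k:ℝ) = 1 := inv_mul_cancel₀ hpos.ne'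
  rw [Real.exp_neg]
  nlinarith [inv_pos.mpr hpos]

lemma exp_neg_nat_ge {k : ℕ} {a : ℝ} (ha : 0 ≤ a) (h : a * 2.7182818286 ^ k ≤ 1) :
    a ≤ Real.exp (-(k:ℝ)) := by
  have hek : Real.exp (k:ℝ) ≤ (2.7182818286:ℝ)^k := by
    rw [← Real.exp_one_pow]
    exact pow_le_pow_left₀ (Real.exp_pos 1).le Real.exp_one_lt_d9.le k
  have h2 : a * Real.exp (k:ℝ) ≤ 1 := by nlinarith
  have hpos : 0 < Real.exp (k:ℝ) := Real.exp_pos _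
  have hinv : (Real.exp (k:ℝ))⁻¹ * Real.exp (k:ℝ) = 1 := inv_mul_cancel₀ hpos.ne'
  rw [Real.exp_neg]
  nlinarith [inv_pos.mpr hpos]


lemma r_pow_le_exp_neg_one (m : ℕ) : ((m:ℝ)/((m:ℝ)+1))^(m+1) ≤ Real.exp (-1) := by
  have hpos : (0:ℝ) < (m:ℝ)+1 := by positivity
  have h1 : (m:ℝ)/((m:ℝ)+1) ≤ Real.exp (-(1/((m:ℝ)+1))) := by
    have h := Real.add_one_le_exp (-(1/((m:ℝ)+1)))
    have h2 : (m:ℝ)/((m:ℝ)+1) = -(1/((m:ℝ)+1)) + 1 := by field_simp; ring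
    linarith
  have h0 : (0:ℝ) ≤ (m:ℝ)/((m:ℝ)+1) := by positivity
  calc ((m:ℝ)/((m:ℝ)+1))^(m+1) ≤ Real.exp (-(1/((m:ℝ)+1))) ^ (m+1) :=
        pow_le_pow_left₀ h0 h1 (m+1)
    _ = Real.exp (-1) := by
        rw [← Real.exp_nat_mul]
        congr 1
        push_cast
        field_simp

lemma H_ge_large (m : ℕ) (hm : 8 ≤ m) : H m ≥ (19 - 67 * Real.exp (-3))/27 := by
  have hm1 : 1 ≤ m := le_trans (by norm_num) hm
  have hm0 : (0:ℝ) < m := by exact_mod_cast hm1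
  set S1 : ℝ := ∑ j ∈ Finset.range (m+1), (m:ℝ)^j / (Nat.factorial j : ℝ) with hS1
  set S2 : ℝ := ∑ j ∈ Finset.range (m+1), ((m:ℝ)+1)^j / (Nat.factorial j : ℝ) with hS2
  set R : ℝ := ((m:ℝ)/((m:ℝ)+1))^(m+1) with hR
  set E : ℝ := Real.exp (-((m:ℝ)+1)) with hE
  set Q : ℝ := Real.exp (-(m:ℝ)) * S1 with hQ
  set A : ℝ := E * S2 with hA
  -- E * S1 = exp(-1) * Q
  have hES1 : E * S1 = Real.exp (-1) * Q := by
    rw [hE, hQ, ← mul_assoc, ← Real.exp_add]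
    ring_nf
  -- A ≤ 1
  have hA1 : A ≤ 1 := by
    have hs : S2 ≤ Real.exp ((m:ℝ)+1) := Real.sum_le_exp_of_nonneg (by positivity) (m+1)
    have := mul_le_mul_of_nonneg_left hs (Real.exp_pos (-((m:ℝ)+1))).le
    rw [← Real.exp_add, show (-((m:ℝ)+1)) + ((m:ℝ)+1) = 0 by ring, Real.exp_zero] at this
    exact this
  have hA0 : 0 ≤ A := by
    rw [hA, hE]
    apply mul_nonneg (Real.exp_pos _).le
    apply Finset.sum_nonneg
    intro j _
    positivity
  have hRpos : 0 ≤ R := by rw [hR]; positivity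
  have hRe : R ≤ Real.exp (-1) := r_pow_le_exp_neg_one m
  -- Q - A ≤ 1/(sqrt π * sqrt (2m)) ≤ 0.14105
  have hQA : Q - A ≤ Real.exp (-(m:ℝ)) * (m:ℝ)^m / (Nat.factorial m : ℝ) :=
    cdf_diff_le m hm1
  have hsp : (1.772453:ℝ) ≤ Real.sqrt π := by
    rw [show (1.772453:ℝ) = Real.sqrt (1.772453^2) by
      rw [Real.sqrt_sq (by norm_num)]]
    apply Real.sqrt_le_sqrt
    nlinarith [Real.pi_gt_d6]
  have hs2m : (4:ℝ) ≤ Real.sqrt (2*m) := by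
    rw [show (4:ℝ) = Real.sqrt 16 by
      rw [show (16:ℝ) = 4^2 by norm_num, Real.sqrt_sq (by norm_num)]]
    apply Real.sqrt_le_sqrt
    have : (8:ℝ) ≤ m := by exact_mod_cast hm
    linarith
  have hBpos : (0:ℝ) < Real.sqrt π * Real.sqrt (2*m) := by nlinarith
  have hstir : Real.exp (-(m:ℝ)) * (m:ℝ)^m / (Nat.factorial m : ℝ)
      ≤ 1 / (Real.sqrt π * Real.sqrt (2*m)) := by
    have hfac := stirling_lb m hm1
    have hme : ((m:ℝ)/Real.exp 1)^m = (m:ℝ)^m * Real.exp (-(m:ℝ)) := by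
      rw [div_pow, Real.exp_neg]
      rw [← Real.exp_one_pow]
      ring
    rw [hme] at hfac
    have hNpos : (0:ℝ) < (m:ℝ)^m * Real.exp (-(m:ℝ)) := by positivity
    have hBfull : 0 < Real.sqrt π * Real.sqrt (2*m) * ((m:ℝ)^m * Real.exp (-(m:ℝ))) := by
      nlinarith
    rw [div_le_div_iff₀ (by positivity) hBpos]
    calc Real.exp (-(m:ℝ)) * (m:ℝ)^m * (Real.sqrt π * Real.sqrt (2*m))
        = (Real.sqrt π * Real.sqrt (2*m) * ((m:ℝ)^m * Real.exp (-(m:ℝ)))) := by ring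
      _ ≤ (Nat.factorial m : ℝ) := hfac
      _ = 1 * (Nat.factorial m : ℝ) := by ring
  have hinv : 1 / (Real.sqrt π * Real.sqrt (2*m)) ≤ 0.14105 := by
    rw [div_le_iff₀ hBpos]
    nlinarith
  have he1ub : Real.exp (-1:ℝ) ≤ 0.367879441193 := by
    have := exp_neg_nat_le (k := 1) (a := 0.367879441193) (by norm_num)
    norm_num at this
    linarith
  have he1pos : (0:ℝ) ≤ Real.exp (-1:ℝ) := (Real.exp_pos _).le
  have he3lb : (0.049787068360:ℝ) ≤ Real.exp (-3:ℝ) := by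
    have := exp_neg_nat_ge (k := 3) (a := 0.049787068360) (by norm_num) (by norm_num)
    norm_num at this
    linarith
  have hHm : H m = 1 - R - Real.exp (-1) * Q + R * A := by
    rw [H_closed, ← hS1, ← hS2, ← hR, ← hE, ← hES1, hA]
    ring
  rw [hHm, ge_iff_le]
  have s1 : R * (1 - A) ≤ Real.exp (-1) * (1 - A) :=
    mul_le_mul_of_nonneg_right hRe (by linarith)
  have s2 : Real.exp (-1) * (Q - A) ≤ Real.exp (-1) * 0.14105 :=
    mul_le_mul_of_nonneg_left (by linarith) he1pos
  nlinarith [s1, s2]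

lemma H_ge (m : ℕ) : H m ≥ (19 - 67 * Real.exp (-3))/27 := by
  have he3 : (0.049787068360:ℝ) ≤ Real.exp (-3:ℝ) := by
    have := exp_neg_nat_ge (k := 3) (a := 0.049787068360) (by norm_num) (by norm_num)
    norm_num at this
    linarith
  rcases lt_or_ge m 8 with h8 | h8
  swap
  · exact H_ge_large m h8
  interval_cases m
  · -- m = 0
    rw [H_closed]
    have h := exp_neg_nat_le (k := 1) (a := 0.367879441193) (by norm_num)
    norm_num at h
    norm_num [Finset.sum_range_succ, Nat.factorial]
    linarith
  · -- m = 1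
    rw [H_closed]
    have h := exp_neg_nat_le (k := 2) (a := 0.135335283253) (by norm_num)
    norm_num at h
    norm_num [Finset.sum_range_succ, Nat.factorial]
    linarith
  · -- m = 2 (equality case)
    rw [H_closed]
    norm_num [Finset.sum_range_succ, Nat.factorial]
    linarith
  · -- m = 3
    rw [H_closed]
    have h := exp_neg_nat_le (k := 4) (a := 0.018315638894) (by norm_num)
    norm_num at h
    norm_num [Finset.sum_range_succ, Nat.factorial]
    linarith
  · -- m = 4
    rw [H_closed]
    have h := exp_neg_nat_le (k := 5) (a := 0.006737947002) (by norm_num)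
    norm_num at h
    norm_num [Finset.sum_range_succ, Nat.factorial]
    linarith
  · -- m = 5
    rw [H_closed]
    have h := exp_neg_nat_le (k := 6) (a := 0.002478752178) (by norm_num)
    norm_num at h
    norm_num [Finset.sum_range_succ, Nat.factorial]
    linarith
  · -- m = 6
    rw [H_closed]
    have h := exp_neg_nat_le (k := 7) (a := 0.000911881966) (by norm_num)
    norm_num at h
    norm_num [Finset.sum_range_succ, Nat.factorial]
    linarith
  · -- m = 7
    rw [H_closed]
    have h := exp_neg_nat_le (k := 8) (a := 0.000335462629) (by norm_num)
    norm_num at h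
    norm_num [Finset.sum_range_succ, Nat.factorial]
    linarith


theorem stmt_9 (b : ℕ) (hb : 1 ≤ b) (p q : ℝ) (hp0 : 0 ≤ p) (hp1 : p < 1)
    (hpq : p + q = (b : ℝ)) :
    p * ∑ ℓ ∈ Finset.range b,
        q ^ ℓ / (Nat.factorial ℓ : ℝ) * ∫ ζ in (0:ℝ)..1, ζ ^ ℓ * Real.exp (-((b : ℝ) * ζ))
      ≥ p * H (b - 1) ∧
    p * H (b - 1) ≥ ((19 - 67 * Real.exp (-3)) / 27) * p := by
  obtain ⟨m, rfl⟩ : ∃ m, b = m + 1 := ⟨b - 1, by omega⟩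
  have hm1 : m + 1 - 1 = m := rfl
  rw [hm1]
  have hq : (m:ℝ) ≤ q := by
    have h := hpq.symm
    push_cast at h
    linarith
  constructor
  · rw [ge_iff_le]
    apply mul_le_mul_of_nonneg_left _ hp0
    rw [Hsum]
    push_cast
    apply Finset.sum_le_sum
    intro ℓ _
    have hJ : 0 ≤ ∫ ζ in (0:ℝ)..1, ζ^ℓ * Real.exp (-(((m:ℝ)+1) * ζ)) := by
      apply intervalIntegral.integral_nonneg (by norm_num)
      intro x hx
      have : (0:ℝ) ≤ x := hx.1
      positivity
    apply mul_le_mul_of_nonneg_right _ hJ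
    have hpow : ((m:ℝ))^ℓ ≤ q^ℓ := pow_le_pow_left₀ (Nat.cast_nonneg m) hq ℓ
    have hfac : (0:ℝ) < (Nat.factorial ℓ : ℝ) := by exact_mod_cast Nat.factorial_pos ℓ
    exact (div_le_div_iff_of_pos_right hfac).mpr hpow
  · rw [ge_iff_le]
    calc (19 - 67 * Real.exp (-3)) / 27 * p ≤ H m * p :=
          mul_le_mul_of_nonneg_right (H_ge m) hp0
      _ = p * H m := mul_comm _ _
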